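/- Let S be a representable R-module over a commutative Noetherian ring R. If 𝔭 is a minimal prime of the ideal Ann_R(S) (i.e., 𝔭 ∈ Min(R/Ann_R S)), then 𝔭 is an attached prime of S. -/

import Mathlib

noncomputable section
open CategoryTheory

namespace Paper

variable (R : Type) [CommRing R]

/-- The `i`-th local cohomology of the `R`-module `M` with respect to the ideal `I`. -/
abbrev H (I : Ideal R) (i : ℕ) (M : Type) [AddCommGroup M] [Module R M] : ModuleCat R :=
  (localCohomology I i).obj (ModuleCat.of R M)

/-- `N` is a `p`-secondary submodule of `M`: it is nonzero, every `r : R` acts on it either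
surjectively or nilpotently, and `p` is the radical of its annihilator. -/
def IsSecondaryFor {M : Type} [AddCommGroup M] [Module R M]
    (N : Submodule R M) (p : Ideal R) : Prop :=
  N ≠ ⊥ ∧
  (∀ r : R, (∀ m ∈ N, ∃ n ∈ N, r • n = m) ∨ (∃ k : ℕ, ∀ m ∈ N, r ^ k • m = 0)) ∧
  N.annihilator.radical = p

/-- A minimal secondary representation of the module `M`. -/
structure MinSecRep (M : Type) [AddCommGroup M] [Module R M] where
  n : ℕ
  S : Fin n → Submodule R M
  p : Fin n → Ideal R
  prime : ∀ i, (p i).IsPrime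
  sec : ∀ i, IsSecondaryFor R (S i) (p i)
  sum : (⨆ i, S i) = ⊤
  inj : Function.Injective p
  irred : ∀ j, ¬ (S j ≤ ⨆ i ∈ ({j}ᶜ : Set (Fin n)), S i)

/-- `M` is representable: it is a (finite) sum of secondary submodules. -/
def IsRepresentable (M : Type) [AddCommGroup M] [Module R M] : Prop :=
  ∃ (n : ℕ) (S : Fin n → Submodule R M) (p : Fin n → Ideal R),
    (∀ i, (p i).IsPrime) ∧ (∀ i, IsSecondaryFor R (S i) (p i)) ∧ (⨆ i, S i) = ⊤

/-- The set of attached primes of `M`: the primes occurring in a minimal secondary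
representation of `M`. -/
def attached (M : Type) [AddCommGroup M] [Module R M] : Set (Ideal R) :=
  {q | ∃ (rep : MinSecRep R M) (i : Fin rep.n), rep.p i = q}

/-- The coheight (dimension of `R/I`): Krull dimension of the set of primes containing `I`. -/
def coheight (I : Ideal R) : WithBot ℕ∞ :=
  Order.krullDim {p : Ideal R // p.IsPrime ∧ I ≤ p}

/-- The Krull dimension of the ring `R`. -/
def ringDim : WithBot ℕ∞ := Order.krullDim {p : Ideal R // p.IsPrime}

/-- The Krull dimension of (the support of) the finitely generated module `M`. -/
def dimMod (M : Type) [AddCommGroup M] [Module R M] : WithBot ℕ∞ :=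
  coheight R (Module.annihilator R M)

/-- The dimension of the localized module `M_q`: chains of primes in the support of `M`
contained in `q`. -/
def dimModAt (M : Type) [AddCommGroup M] [Module R M] (q : Ideal R) : WithBot ℕ∞ :=
  Order.krullDim {p : Ideal R // p.IsPrime ∧ Module.annihilator R M ≤ p ∧ p ≤ q}

/-- The support of a finitely generated module: primes containing the annihilator. -/
def supp (M : Type) [AddCommGroup M] [Module R M] : Set (Ideal R) :=
  {p | p.IsPrime ∧ Module.annihilator R M ≤ p}

/-- `Min M`: minimal primes of the support of `M`. -/
def minSupp (M : Type) [AddCommGroup M] [Module R M] : Set (Ideal R) :=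
  (Module.annihilator R M).minimalPrimes

/-- `Assh M`: primes in the support of maximal coheight. -/
def assh (M : Type) [AddCommGroup M] [Module R M] : Set (Ideal R) :=
  {p | p ∈ supp R M ∧ coheight R p = dimMod R M}

open RingTheory.Sequence in
/-- Depth of `M` with respect to the ideal `J`: supremum of the lengths of `M`-regular
sequences contained in `J`. -/
def depthOn (J : Ideal R) (M : Type) [AddCommGroup M] [Module R M] : ℕ∞ :=
  ⨆ l ∈ {l : List R | (∀ x ∈ l, x ∈ J) ∧ IsRegular M l}, (l.length : ℕ∞)

/-- `M` is a Cohen–Macaulay module over the local ring `R`: depth = dimension. -/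
def IsCMLocalMod [IsLocalRing R] (M : Type) [AddCommGroup M] [Module R M] : Prop :=
  (depthOn R (IsLocalRing.maximalIdeal R) M : WithBot ℕ∞) = dimMod R M

/-- `R` is a Cohen–Macaulay local ring: it is local and its depth (w.r.t. its Jacobson
radical, which is the maximal ideal) equals its Krull dimension. -/
def IsCMLocalRing : Prop :=
  IsLocalRing R ∧ ((depthOn R ((⊥ : Ideal R).jacobson) R : WithBot ℕ∞) = ringDim R)

/-- `R` is a Cohen–Macaulay ring: all of its localizations at primes are CM local rings. -/
def IsCMRing : Prop :=
  ∀ (p : Ideal R) [p.IsPrime], IsCMLocalRing (Localization.AtPrime p)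

/-- `M` is an equidimensional module: every minimal prime of its support has coheight equal
to the dimension of `M`. -/
def IsEquidim (M : Type) [AddCommGroup M] [Module R M] : Prop :=
  ∀ q ∈ minSupp R M, coheight R q = dimMod R M

/-- `R` is catenary: any two saturated chains of primes with the same endpoints have the
same length. -/
def IsCatenary : Prop :=
  ∀ (c₁ c₂ : LTSeries {p : Ideal R // p.IsPrime}),
    c₁.head = c₂.head → c₁.last = c₂.last →
    (∀ i : Fin c₁.length, c₁.toFun i.castSucc ⋖ c₁.toFun i.succ) →
    (∀ i : Fin c₂.length, c₂.toFun i.castSucc ⋖ c₂.toFun i.succ) →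
    c₁.length = c₂.length

/-- `R` is universally catenary: every finitely generated `R`-algebra is catenary. -/
def IsUnivCatenary : Prop :=
  ∀ (A : Type) [CommRing A] [Algebra R A], Algebra.FiniteType R A → IsCatenary A

/-- `x` is a uniform local cohomological annihilator of `M`: `x` avoids all minimal primes
of `M` and, for every maximal ideal `m`, kills `H^i_m(M)` for all `i < dim M_m`. -/
def IsULCA (M : Type) [AddCommGroup M] [Module R M] (x : R) : Prop :=
  (∀ p ∈ minSupp R M, x ∉ p) ∧
  ∀ (m : Ideal R), m.IsMaximal → ∀ i : ℕ, (i : WithBot ℕ∞) < dimModAt R M m →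
    ∀ y : H R m i M, x • y = 0

/-- `M` has a uniform local cohomological annihilator. -/
def HasULCA (M : Type) [AddCommGroup M] [Module R M] : Prop := ∃ x, IsULCA R M x

/-- `R/p` has a uniform local cohomological annihilator (local case): some `x ∉ p` kills
`H^i_𝔪(R/p)` for all `i < dim R/p`. -/
def HasULCAQuot [IsLocalRing R] (p : Ideal R) : Prop :=
  ∃ x ∉ p, ∀ i : ℕ, (i : WithBot ℕ∞) < coheight R p →
    ∀ y : H R (IsLocalRing.maximalIdeal R) i (R ⧸ p), x • y = 0

/-- `M` is generalized Cohen–Macaulay over the local ring `R`: a power of the maximal ideal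
kills all local cohomology below the dimension. -/
def IsGCM [IsLocalRing R] (M : Type) [AddCommGroup M] [Module R M] : Prop :=
  ∃ n : ℕ, ∀ i : ℕ, (i : WithBot ℕ∞) < dimMod R M →
    ∀ a ∈ (IsLocalRing.maximalIdeal R) ^ n,
      ∀ y : H R (IsLocalRing.maximalIdeal R) i M, a • y = 0

end Paper

namespace MinAnnAux

variable {R : Type} [CommRing R] {M : Type} [AddCommGroup M] [Module R M]

lemma sec_sup {N₁ N₂ : Submodule R M} {p : Ideal R}
    (h₁ : Paper.IsSecondaryFor R N₁ p) (h₂ : Paper.IsSecondaryFor R N₂ p) :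
    Paper.IsSecondaryFor R (N₁ ⊔ N₂) p := by
  obtain ⟨ne₁, d₁, r₁⟩ := h₁
  obtain ⟨ne₂, d₂, r₂⟩ := h₂
  have hkill : ∀ r : R, r ∈ p → ∃ k : ℕ, ∀ m ∈ N₁ ⊔ N₂, r ^ k • m = 0 := by
    intro r hr
    obtain ⟨k₁, hk₁⟩ := Ideal.mem_radical_iff.mp (r₁ ▸ hr)
    obtain ⟨k₂, hk₂⟩ := Ideal.mem_radical_iff.mp (r₂ ▸ hr)
    refine ⟨k₁ + k₂, ?_⟩
    intro m hm
    obtain ⟨m₁, hm₁, m₂, hm₂, rfl⟩ := Submodule.mem_sup.mp hm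
    have e₁ : r ^ k₁ • m₁ = 0 := Submodule.mem_annihilator.mp hk₁ m₁ hm₁
    have e₂ : r ^ k₂ • m₂ = 0 := Submodule.mem_annihilator.mp hk₂ m₂ hm₂
    rw [smul_add]
    have h1 : r ^ (k₁ + k₂) • m₁ = 0 := by
      rw [add_comm, pow_add, mul_smul, e₁, smul_zero]
    rw [h1, zero_add, pow_add, mul_smul, e₂, smul_zero]
  refine ⟨?_, ?_, ?_⟩
  · intro h
    exact ne₁ (le_bot_iff.mp (h ▸ le_sup_left))
  · intro r
    by_cases hnil : r ∈ p
    · exact Or.inr (hkill r hnil)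
    · left
      have hs₁ : ∀ m ∈ N₁, ∃ n ∈ N₁, r • n = m := by
        rcases d₁ r with h | ⟨k, hk⟩
        · exact h
        · exact absurd (r₁ ▸ Ideal.mem_radical_iff.mpr
            ⟨k, Submodule.mem_annihilator.mpr hk⟩) hnil
      have hs₂ : ∀ m ∈ N₂, ∃ n ∈ N₂, r • n = m := by
        rcases d₂ r with h | ⟨k, hk⟩
        · exact h
        · exact absurd (r₂ ▸ Ideal.mem_radical_iff.mpr
            ⟨k, Submodule.mem_annihilator.mpr hk⟩) hnil
      intro m hm
      obtain ⟨m₁, hm₁, m₂, hm₂, rfl⟩ := Submodule.mem_sup.mp hm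
      obtain ⟨n₁, hn₁, e₁⟩ := hs₁ m₁ hm₁
      obtain ⟨n₂, hn₂, e₂⟩ := hs₂ m₂ hm₂
      exact ⟨n₁ + n₂, Submodule.mem_sup.mpr ⟨n₁, hn₁, n₂, hn₂, rfl⟩, by
        rw [smul_add, e₁, e₂]⟩
  · apply le_antisymm
    · rw [← r₁]
      exact Ideal.radical_mono (Submodule.annihilator_mono le_sup_left)
    · intro r hr
      obtain ⟨k, hk⟩ := hkill r hr
      exact Ideal.mem_radical_iff.mpr ⟨k, Submodule.mem_annihilator.mpr hk⟩

lemma exists_minSecRep :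
    ∀ (n : ℕ) (S : Fin n → Submodule R M) (p : Fin n → Ideal R),
    (∀ i, (p i).IsPrime) → (∀ i, Paper.IsSecondaryFor R (S i) (p i)) →
    (⨆ i, S i) = ⊤ → Nonempty (Paper.MinSecRep R M) := by
  intro n
  induction n using Nat.strong_induction_on with
  | _ n ih =>
  intro S p hP hS hsum
  by_cases hmerge : ∃ i j : Fin n, i ≠ j ∧ p i = p j
  · obtain ⟨i, j, hij, hpij⟩ := hmerge
    cases n with
    | zero => exact i.elim0
    | succ m =>
      set S' : Fin m → Submodule R M := fun k =>
        if i.succAbove k = j then S i ⊔ S j else S (i.succAbove k) with hS'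
      refine ih m (Nat.lt_succ_self m) S' (fun k => p (i.succAbove k))
        (fun k => hP _) ?_ ?_
      · intro k
        by_cases h : i.succAbove k = j
        · have e : S' k = S i ⊔ S j := by simp [hS', h]
          show Paper.IsSecondaryFor R (S' k) (p (i.succAbove k))
          rw [e, h]
          exact sec_sup (hpij ▸ hS i) (hS j)
        · show Paper.IsSecondaryFor R (S' k) (p (i.succAbove k))
          have e : S' k = S (i.succAbove k) := by simp [hS', h]
          rw [e]
          exact hS _
      · rw [eq_top_iff, ← hsum]
        apply iSup_le
        intro l
        by_cases hl : l = i
        · subst hl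
          obtain ⟨k₀, hk₀⟩ := Fin.exists_succAbove_eq (Ne.symm hij)
          have e : S' k₀ = S l ⊔ S j := by simp [hS', hk₀]
          exact le_trans le_sup_left (le_trans (le_of_eq e.symm) (le_iSup S' k₀))
        · obtain ⟨k, hk⟩ := Fin.exists_succAbove_eq hl
          have e : S l ≤ S' k := by
            by_cases h2 : i.succAbove k = j
            · have : S' k = S i ⊔ S j := by simp [hS', h2]
              rw [this, ← h2, hk]
              exact le_sup_right
            · have : S' k = S (i.succAbove k) := by simp [hS', h2]
              rw [this, hk]
          exact le_trans e (le_iSup S' k)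
  · by_cases hdrop : ∃ j, S j ≤ ⨆ i ∈ ({j}ᶜ : Set (Fin n)), S i
    · obtain ⟨j, hj⟩ := hdrop
      cases n with
      | zero => exact j.elim0
      | succ m =>
        refine ih m (Nat.lt_succ_self m) (S ∘ j.succAbove) (p ∘ j.succAbove)
          (fun k => hP _) (fun k => hS _) ?_
        have hrange : (⨆ k, S (j.succAbove k)) = ⨆ l ∈ ({j}ᶜ : Set (Fin (m+1))), S l := by
          rw [← Fin.range_succAbove j, iSup_range]
        show (⨆ k, S (j.succAbove k)) = ⊤
        rw [hrange, eq_top_iff, ← hsum]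
        apply iSup_le
        intro l
        by_cases hl : l = j
        · subst hl; exact hj
        · exact le_biSup S (by simp [hl])
    · push_neg at hmerge
      refine ⟨⟨n, S, p, hP, hS, hsum, ?_, fun j hj => hdrop ⟨j, hj⟩⟩⟩
      intro a b hab
      by_contra h
      exact (hmerge a b h) hab

end MinAnnAux

/-- If `S` is a representable module over a commutative Noetherian ring `R` and `p` is a
minimal prime over the annihilator of `S`, then `p` is an attached prime of `S`. -/
theorem min_ann_mem_attached (R : Type) [CommRing R] [IsNoetherianRing R]
    (S : Type) [AddCommGroup S] [Module R S]
    (hrep : Paper.IsRepresentable R S)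
    (p : Ideal R) (hp : p ∈ (Module.annihilator R S).minimalPrimes) :
    p ∈ Paper.attached R S := by
  obtain ⟨n, T, q, hq, hsec, hsum⟩ := hrep
  obtain ⟨rep⟩ := MinAnnAux.exists_minSecRep n T q hq hsec hsum
  have hann : ∀ i, Module.annihilator R S ≤ rep.p i := by
    intro i
    rw [← (rep.sec i).2.2]
    refine le_trans ?_ Ideal.le_radical
    intro r hr
    exact Submodule.mem_annihilator.mpr fun m _ => Module.mem_annihilator.mp hr m
  have key : Finset.univ.inf rep.p ≤ p := by
    intro r hr
    have hri : ∀ i, r ∈ rep.p i := fun i => (Finset.inf_le (Finset.mem_univ i) : Finset.univ.inf rep.p ≤ rep.p i) hr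
    have hri' : ∀ i, ∃ k : ℕ, r ^ k ∈ (rep.S i).annihilator := fun i =>
      Ideal.mem_radical_iff.mp ((rep.sec i).2.2 ▸ hri i)
    choose k hk using hri'
    set K := Finset.univ.sup k with hK
    have hpow : r ^ K ∈ Module.annihilator R S := by
      rw [Module.mem_annihilator]
      intro m
      have hm : m ∈ ⨆ i, rep.S i := rep.sum ▸ Submodule.mem_top
      refine Submodule.iSup_induction (motive := fun x => r ^ K • x = 0) _ hm ?_ ?_ ?_
      · intro i x hx
        have hKk : k i ≤ K := Finset.le_sup (Finset.mem_univ i)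
        have e : r ^ (k i) • x = 0 := Submodule.mem_annihilator.mp (hk i) x hx
        calc r ^ K • x = r ^ (K - k i) • (r ^ (k i) • x) := by
              rw [smul_smul, ← pow_add, Nat.sub_add_cancel hKk]
          _ = 0 := by rw [e, smul_zero]
      · exact smul_zero _
      · intro x y hx hy; rw [smul_add, hx, hy, add_zero]
    exact hp.1.1.mem_of_pow_mem K (hp.1.2 hpow)
  obtain ⟨i, _, hi⟩ := (Ideal.IsPrime.inf_le' hp.1.1).mp key
  have hle : p ≤ rep.p i := hp.2 ⟨rep.prime i, hann i⟩ hi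
  exact ⟨rep, i, le_antisymm hi hle⟩
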